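/- Let q be an odd prime power with q ≡ 5 (mod 12) or q ≡ 7 (mod 12), and let F be the finite field with q elements. Let x be an element of order 3 in PSL_2(q) := SL_2(F) / Z(SL_2(F)). Then the centralizer of x in PSL_2(q) has odd order. -/

import Mathlib

open Matrix

private lemma sl2_ch {F : Type*} [Field F] (M : Matrix (Fin 2) (Fin 2) F) (h : M.det = 1) :
    M * M = M.trace • M - 1 := by
  rw [Matrix.det_fin_two] at h
  ext i j
  fin_cases i <;> fin_cases j <;>
    simp only [Matrix.mul_apply, Fin.sum_univ_two, Matrix.trace_fin_two, Matrix.smul_apply,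
      Matrix.sub_apply, Matrix.one_apply, smul_eq_mul] <;>
    simp
  all_goals
    first
      | linear_combination -h
      | ring

private lemma scalar_det_one_aux {F : Type*} [Field F] {c : F} {m : Matrix (Fin 2) (Fin 2) F}
    (hm : m = c • (1 : Matrix (Fin 2) (Fin 2) F)) (hdet : m.det = 1) :
    m = 1 ∨ m = -1 := by
  subst hm
  rw [Matrix.det_smul, Matrix.det_one, Fintype.card_fin, mul_one] at hdet
  have hcc : c * c = 1 := by rw [← pow_two]; exact hdet
  rcases mul_self_eq_one_iff.mp hcc with rfl | rfl
  · left; simp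
  · right
    ext i j
    simp [Matrix.one_apply, Matrix.neg_apply]
    split <;> simp

private lemma sq_eq_one_cases {F : Type*} [Field F] (h2F : (2 : F) ≠ 0)
    {m : Matrix (Fin 2) (Fin 2) F} (hdet : m.det = 1) (hm : m * m = 1) :
    m = 1 ∨ m = -1 := by
  have hch := sl2_ch m hdet
  rw [hm] at hch
  rw [eq_comm, sub_eq_iff_eq_add] at hch
  have hsm2 : m.trace • m = (2 : F) • (1 : Matrix (Fin 2) (Fin 2) F) := by
    rw [hch, two_smul]
  have ht : m.trace ≠ 0 := by
    intro h0
    rw [h0, zero_smul] at hsm2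
    have h00 := congrFun (congrFun hsm2 0) 0
    simp [Matrix.one_apply, Matrix.smul_apply, smul_eq_mul] at h00
    exact h2F (by linear_combination -h00)
  have hm' : m = (m.trace⁻¹ * 2) • (1 : Matrix (Fin 2) (Fin 2) F) := by
    calc m = m.trace⁻¹ • (m.trace • m) := by
            rw [smul_smul, inv_mul_cancel₀ ht, one_smul]
      _ = m.trace⁻¹ • ((2 : F) • (1 : Matrix (Fin 2) (Fin 2) F)) := by rw [hsm2]
      _ = (m.trace⁻¹ * 2) • (1 : Matrix (Fin 2) (Fin 2) F) := by rw [smul_smul]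
  exact scalar_det_one_aux hm' hdet

private lemma trace_sq_eq_one {F : Type*} [Field F] {a : Matrix (Fin 2) (Fin 2) F}
    (hdet : a.det = 1) (h3 : a * a * a = 1 ∨ a * a * a = -1)
    (hne1 : a ≠ 1) (hnen1 : a ≠ -1) : a.trace * a.trace = 1 := by
  by_contra ht
  set t := a.trace with htdef
  have h2 := sl2_ch a hdet
  have h3' : a * a * a = (t * t - 1) • a - t • (1 : Matrix (Fin 2) (Fin 2) F) := by
    rw [h2, sub_mul, smul_mul_assoc, h2, one_mul]
    ext i j
    simp only [Matrix.sub_apply, Matrix.smul_apply, Matrix.one_apply, smul_eq_mul]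
    split <;> ring
  have htt : t * t - 1 ≠ 0 := fun h => ht (by linear_combination h)
  have key : ∃ c : F, a = c • (1 : Matrix (Fin 2) (Fin 2) F) := by
    rcases h3 with h | h
    · refine ⟨(t * t - 1)⁻¹ * (1 + t), ?_⟩
      have heq : (t * t - 1) • a = (1 + t) • (1 : Matrix (Fin 2) (Fin 2) F) := by
        have h' : (t * t - 1) • a - t • (1 : Matrix (Fin 2) (Fin 2) F) = 1 := h3' ▸ h
        rw [sub_eq_iff_eq_add] at h'
        rw [h', add_smul, one_smul]
      calc a = (t * t - 1)⁻¹ • ((t * t - 1) • a) := by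
              rw [smul_smul, inv_mul_cancel₀ htt, one_smul]
        _ = ((t * t - 1)⁻¹ * (1 + t)) • (1 : Matrix (Fin 2) (Fin 2) F) := by
              rw [heq, smul_smul]
    · refine ⟨(t * t - 1)⁻¹ * (t - 1), ?_⟩
      have heq : (t * t - 1) • a = (t - 1) • (1 : Matrix (Fin 2) (Fin 2) F) := by
        have h' : (t * t - 1) • a - t • (1 : Matrix (Fin 2) (Fin 2) F) = -1 := h3' ▸ h
        rw [sub_eq_iff_eq_add] at h'
        rw [h', sub_smul, one_smul]
        abel
      calc a = (t * t - 1)⁻¹ • ((t * t - 1) • a) := by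
              rw [smul_smul, inv_mul_cancel₀ htt, one_smul]
        _ = ((t * t - 1)⁻¹ * (t - 1)) • (1 : Matrix (Fin 2) (Fin 2) F) := by
              rw [heq, smul_smul]
  obtain ⟨c, hc⟩ := key
  rcases scalar_det_one_aux hc hdet with h | h
  · exact hne1 h
  · exact hnen1 h

private lemma mem_center_sl2_iff {F : Type*} [Field F]
    {C : Matrix.SpecialLinearGroup (Fin 2) F} :
    C ∈ Subgroup.center (Matrix.SpecialLinearGroup (Fin 2) F) ↔
      (C : Matrix (Fin 2) (Fin 2) F) = 1 ∨ (C : Matrix (Fin 2) (Fin 2) F) = -1 := by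
  rw [Matrix.SpecialLinearGroup.mem_center_iff]
  constructor
  · rintro ⟨r, hr, hC⟩
    rw [Fintype.card_fin] at hr
    have hcc : r * r = 1 := by rw [← pow_two]; exact hr
    rcases mul_self_eq_one_iff.mp hcc with rfl | rfl
    · left; rw [← hC]; exact _root_.map_one _
    · right; rw [← hC, map_neg, _root_.map_one]
  · rintro (h | h)
    · exact ⟨1, one_pow _, by rw [_root_.map_one]; exact h.symm⟩
    · exact ⟨-1, by rw [Fintype.card_fin]; norm_num,
        by rw [map_neg, _root_.map_one]; exact h.symm⟩

private lemma not_isSquare_three {F : Type*} [Field F] [Fintype F] (q : ℕ)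
    (hq : Odd q) (hcard : Fintype.card F = q) (hmod : q % 12 = 5 ∨ q % 12 = 7) :
    ¬ IsSquare (3 : F) := by
  have hF2 : ringChar F ≠ 2 := by
    intro h
    have := FiniteField.even_card_of_char_two h
    rw [hcard] at this
    rw [Nat.odd_iff] at hq
    omega
  have h32 : (3 : ℕ) ≠ 2 := by norm_num
  have hiff := FiniteField.isSquare_odd_prime_iff (F := F) hF2 h32
  rw [show ((3 : ℕ) : F) = (3 : F) by norm_num] at hiff
  rw [hiff, hcard]
  simp only [ne_eq, not_not]
  rcases hmod with h | h
  · rw [show ((q : ℕ) : ZMod 4) = 1 by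
      rw [← ZMod.natCast_mod q 4, show q % 4 = 1 by omega]; rfl]
    rw [show ((q : ℕ) : ZMod 3) = 2 by
      rw [← ZMod.natCast_mod q 3, show q % 3 = 2 by omega]; rfl]
    decide
  · rw [show ((q : ℕ) : ZMod 4) = 3 by
      rw [← ZMod.natCast_mod q 4, show q % 4 = 3 by omega]; rfl]
    rw [show ((q : ℕ) : ZMod 3) = 1 by
      rw [← ZMod.natCast_mod q 3, show q % 3 = 1 by omega]; rfl]
    decide

private lemma matrix_contra {F : Type*} [Field F] (h2F : (2 : F) ≠ 0)
    (h3sq : ¬ IsSquare (3 : F)) {a b : Matrix (Fin 2) (Fin 2) F}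
    (hdeta : a.det = 1) (hdetb : b.det = 1)
    (ha3 : a * a * a = 1 ∨ a * a * a = -1) (hne1 : a ≠ 1) (hnen1 : a ≠ -1)
    (hb2 : b * b = -1) (hcase : a * b = b * a ∨ a * b = -(b * a)) : False := by
  rcases hcase with hab | hab
  · have htsq : a.trace * a.trace = 1 := trace_sq_eq_one hdeta ha3 hne1 hnen1
    have hcha := sl2_ch a hdeta
    have hdetab : (a * b).det = 1 := by rw [Matrix.det_mul, hdeta, hdetb, mul_one]
    have hchab := sl2_ch (a * b) hdetab
    have key : a * b * (a * b) = a * a * (b * b) := by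
      rw [mul_assoc a b (a * b), ← mul_assoc b a b, ← hab, mul_assoc a b b, ← mul_assoc]
    have key2 : a * a * (b * b) = 1 - a.trace • a := by
      rw [hcha, hb2, mul_neg_one, neg_sub]
    have heq : (a * b).trace • (a * b) - 1 = 1 - a.trace • a := by
      rw [← hchab, key, key2]
    have htr := congrArg Matrix.trace heq
    rw [Matrix.trace_sub, Matrix.trace_sub, Matrix.trace_smul, Matrix.trace_smul,
      Matrix.trace_one] at htr
    simp only [smul_eq_mul, Fintype.card_fin, Nat.cast_ofNat] at htr
    have husq : (a * b).trace * (a * b).trace = 3 := by linear_combination htr - htsq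
    exact h3sq ⟨(a * b).trace, by linear_combination -husq⟩
  · have h1 : a * a * b = b * (a * a) := by
      calc a * a * b = a * (a * b) := mul_assoc a a b
        _ = a * (-(b * a)) := by rw [hab]
        _ = -(a * (b * a)) := by rw [mul_neg]
        _ = -(a * b * a) := by rw [← mul_assoc a b a]
        _ = -(-(b * a) * a) := by rw [hab]
        _ = b * a * a := by rw [neg_mul, neg_neg]
        _ = b * (a * a) := mul_assoc b a a
    have h2 : a * a * a * b = -(b * (a * a * a)) := by
      calc a * a * a * b = a * a * (a * b) := mul_assoc (a * a) a b
        _ = a * a * (-(b * a)) := by rw [hab]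
        _ = -(a * a * (b * a)) := by rw [mul_neg]
        _ = -(a * a * b * a) := by rw [← mul_assoc (a * a) b a]
        _ = -(b * (a * a) * a) := by rw [h1]
        _ = -(b * (a * a * a)) := by rw [mul_assoc b (a * a) a]
    have hbb : b = -b := by
      rcases ha3 with h | h
      · rw [h, one_mul, mul_one] at h2
        exact h2
      · rw [h, neg_one_mul, mul_neg_one, neg_neg] at h2
        exact neg_eq_iff_eq_neg.mp h2
    have hadd : b + b = 0 := by
      nth_rewrite 2 [hbb]
      exact add_neg_cancel b
    have hb0 : b = 0 := by
      ext i j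
      have hij := congrFun (congrFun hadd i) j
      rw [Matrix.add_apply, Matrix.zero_apply] at hij
      have h2b : (2 : F) * b i j = 0 := by linear_combination hij
      rcases mul_eq_zero.mp h2b with h' | h'
      · exact absurd h' h2F
      · rw [Matrix.zero_apply]; exact h'
    haveI : Nonempty (Fin 2) := ⟨0⟩
    rw [hb0, Matrix.det_zero] at hdetb
    · exact one_ne_zero hdetb.symm

/-- Let `q` be an odd prime power with `q ≡ 5 (mod 12)` or `q ≡ 7 (mod 12)`, let `F` be
the field with `q` elements, and let `x` be an element of order 3 in
`PSL₂(q) = SL₂(F)/Z(SL₂(F))`. Then the centralizer of `x` has odd order. -/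
theorem PSL2_orderThree_centralizer_odd_of_five_or_seven_mod_twelve
    {F : Type*} [Field F] [Fintype F] (q : ℕ)
    (hq : Odd q) (hq' : IsPrimePow q) (hcard : Fintype.card F = q)
    (hmod : q % 12 = 5 ∨ q % 12 = 7)
    (x : Matrix.SpecialLinearGroup (Fin 2) F ⧸
        Subgroup.center (Matrix.SpecialLinearGroup (Fin 2) F))
    (hx : orderOf x = 3) :
    Odd (Nat.card (Subgroup.centralizer {x})) := by
  classical
  have h2F : (2 : F) ≠ 0 := by
    have hF2 : ringChar F ≠ 2 := by
      intro h
      have := FiniteField.even_card_of_char_two h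
      rw [hcard] at this
      rw [Nat.odd_iff] at hq
      omega
    exact Ring.two_ne_zero hF2
  rw [Nat.odd_iff]
  by_contra h2
  have h2' : 2 ∣ Nat.card (Subgroup.centralizer {x}) := by omega
  obtain ⟨y₀, hy₀⟩ := exists_prime_orderOf_dvd_card' 2 h2'
  have hy : orderOf ((y₀ : Subgroup.centralizer {x}) :
      Matrix.SpecialLinearGroup (Fin 2) F ⧸
        Subgroup.center (Matrix.SpecialLinearGroup (Fin 2) F)) = 2 :=
    (Subgroup.orderOf_coe y₀).trans hy₀
  have hcomm : x * ((y₀ : Subgroup.centralizer {x}) :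
      Matrix.SpecialLinearGroup (Fin 2) F ⧸
        Subgroup.center (Matrix.SpecialLinearGroup (Fin 2) F)) =
      ((y₀ : Subgroup.centralizer {x}) :
      Matrix.SpecialLinearGroup (Fin 2) F ⧸
        Subgroup.center (Matrix.SpecialLinearGroup (Fin 2) F)) * x := by
    have hmem := y₀.2
    rw [Subgroup.mem_centralizer_iff] at hmem
    exact hmem x (Set.mem_singleton x)
  obtain ⟨A, hA⟩ := QuotientGroup.mk_surjective x
  obtain ⟨B, hB⟩ := QuotientGroup.mk_surjective ((y₀ : Subgroup.centralizer {x}) :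
      Matrix.SpecialLinearGroup (Fin 2) F ⧸
        Subgroup.center (Matrix.SpecialLinearGroup (Fin 2) F))
  have hA3 : A ^ 3 ∈ Subgroup.center (Matrix.SpecialLinearGroup (Fin 2) F) := by
    rw [← QuotientGroup.eq_one_iff, QuotientGroup.mk_pow, hA]
    have := pow_orderOf_eq_one x
    rw [hx] at this
    exact this
  have hB2 : B ^ 2 ∈ Subgroup.center (Matrix.SpecialLinearGroup (Fin 2) F) := by
    rw [← QuotientGroup.eq_one_iff, QuotientGroup.mk_pow, hB]
    have := pow_orderOf_eq_one ((y₀ : Subgroup.centralizer {x}) :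
      Matrix.SpecialLinearGroup (Fin 2) F ⧸
        Subgroup.center (Matrix.SpecialLinearGroup (Fin 2) F))
    rw [hy] at this
    exact this
  have hAnc : A ∉ Subgroup.center (Matrix.SpecialLinearGroup (Fin 2) F) := by
    intro hc
    rw [← QuotientGroup.eq_one_iff, hA] at hc
    rw [hc, orderOf_one] at hx
    omega
  have hBnc : B ∉ Subgroup.center (Matrix.SpecialLinearGroup (Fin 2) F) := by
    intro hc
    rw [← QuotientGroup.eq_one_iff, hB] at hc
    rw [hc, orderOf_one] at hy
    omega
  have hz : (B * A)⁻¹ * (A * B) ∈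
      Subgroup.center (Matrix.SpecialLinearGroup (Fin 2) F) := by
    rw [← QuotientGroup.eq]
    show (QuotientGroup.mk (B * A) : _) = QuotientGroup.mk (A * B)
    rw [QuotientGroup.mk_mul, QuotientGroup.mk_mul, hA, hB]
    exact hcomm.symm
  have ha3 : (A : Matrix (Fin 2) (Fin 2) F) * A * A = 1 ∨
      (A : Matrix (Fin 2) (Fin 2) F) * A * A = -1 := by
    rcases mem_center_sl2_iff.mp hA3 with h | h
    · left
      rw [Matrix.SpecialLinearGroup.coe_pow, pow_succ, pow_two] at h
      exact h
    · right
      rw [Matrix.SpecialLinearGroup.coe_pow, pow_succ, pow_two] at h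
      exact h
  have hb2 : (B : Matrix (Fin 2) (Fin 2) F) * B = -1 := by
    rcases mem_center_sl2_iff.mp hB2 with h | h
    · exfalso
      rw [Matrix.SpecialLinearGroup.coe_pow, pow_two] at h
      rcases sq_eq_one_cases h2F B.2 h with h' | h' <;>
        exact hBnc (mem_center_sl2_iff.mpr (by tauto))
    · rw [Matrix.SpecialLinearGroup.coe_pow, pow_two] at h
      exact h
  have hcases : (A : Matrix (Fin 2) (Fin 2) F) * B = (B : Matrix (Fin 2) (Fin 2) F) * A ∨
      (A : Matrix (Fin 2) (Fin 2) F) * B = -((B : Matrix (Fin 2) (Fin 2) F) * A) := by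
    have hzz : A * B = (B * A) * ((B * A)⁻¹ * (A * B)) := by group
    have h1 : ((A * B : Matrix.SpecialLinearGroup (Fin 2) F) : Matrix (Fin 2) (Fin 2) F) =
        (((B * A : Matrix.SpecialLinearGroup (Fin 2) F) : Matrix (Fin 2) (Fin 2) F)) *
          ((((B * A)⁻¹ * (A * B) : Matrix.SpecialLinearGroup (Fin 2) F) :
            Matrix (Fin 2) (Fin 2) F)) := by
      rw [← Matrix.SpecialLinearGroup.coe_mul]
      exact congrArg Subtype.val hzz
    rcases mem_center_sl2_iff.mp hz with h | h
    · left
      rw [h, mul_one, Matrix.SpecialLinearGroup.coe_mul, Matrix.SpecialLinearGroup.coe_mul]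
        at h1
      exact h1
    · right
      rw [h, mul_neg_one, Matrix.SpecialLinearGroup.coe_mul, Matrix.SpecialLinearGroup.coe_mul]
        at h1
      exact h1
  have hne1 : (A : Matrix (Fin 2) (Fin 2) F) ≠ 1 :=
    fun h => hAnc (mem_center_sl2_iff.mpr (Or.inl h))
  have hnen1 : (A : Matrix (Fin 2) (Fin 2) F) ≠ -1 :=
    fun h => hAnc (mem_center_sl2_iff.mpr (Or.inr h))
  exact matrix_contra h2F (not_isSquare_three q hq hcard hmod) A.2 B.2 ha3 hne1 hnen1
    hb2 hcases
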